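/- Let B, C, D be affinely independent points in Euclidean 3-space with dist(B,C) = dist(C,D) = dist(D,B) = s, s > 0, and let A be a point with dist(A,B) = dist(A,C) = dist(A,D) = a, where s/√3 < a < 2s/√3. Let O be the orthogonal projection of A onto the affine plane spanned by {B, C, D} (so A ≠ O). Then the closed ball of radius a/2 centered at B is disjoint from the line through A and O. -/

import Mathlib

theorem stmt_2 (A B C D O : EuclideanSpace ℝ (Fin 3)) (s a : ℝ) (hs : 0 < s)
    (hind : AffineIndependent ℝ ![B, C, D])
    (hBC : dist B C = s) (hCD : dist C D = s) (hDB : dist D B = s)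
    (hAB : dist A B = a) (hAC : dist A C = a) (hAD : dist A D = a)
    (ha_lo : s / Real.sqrt 3 < a) (ha_hi : a < 2 * s / Real.sqrt 3)
    (hO_mem : O ∈ affineSpan ℝ ({B, C, D} : Set (EuclideanSpace ℝ (Fin 3))))
    (hO_perp : ∀ v ∈ (affineSpan ℝ ({B, C, D} : Set (EuclideanSpace ℝ (Fin 3)))).direction,
      inner ℝ (A - O) v = (0 : ℝ)) :
    Disjoint (Metric.closedBall B (a / 2))
      ((affineSpan ℝ ({A, O} : Set (EuclideanSpace ℝ (Fin 3)))) : Set (EuclideanSpace ℝ (Fin 3))) := by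
  have hBm : B ∈ affineSpan ℝ ({B, C, D} : Set (EuclideanSpace ℝ (Fin 3))) :=
    mem_affineSpan ℝ (by simp)
  have hCm : C ∈ affineSpan ℝ ({B, C, D} : Set (EuclideanSpace ℝ (Fin 3))) :=
    mem_affineSpan ℝ (by simp)
  have hDm : D ∈ affineSpan ℝ ({B, C, D} : Set (EuclideanSpace ℝ (Fin 3))) :=
    mem_affineSpan ℝ (by simp)
  have perp : ∀ X, X ∈ affineSpan ℝ ({B, C, D} : Set (EuclideanSpace ℝ (Fin 3))) →
      inner ℝ (A - O) (X - O) = (0 : ℝ) := by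
    intro X hX
    have : X - O ∈ (affineSpan ℝ ({B, C, D} : Set (EuclideanSpace ℝ (Fin 3)))).direction := by
      simpa [vsub_eq_sub] using AffineSubspace.vsub_mem_direction hX hO_mem
    exact hO_perp _ this
  have pB := perp B hBm
  have pC := perp C hCm
  have pD := perp D hDm
  have pyth : ∀ X : EuclideanSpace ℝ (Fin 3), dist A X = a →
      inner ℝ (A - O) (X - O) = (0:ℝ) → ‖X - O‖^2 = a^2 - ‖A - O‖^2 := by
    intro X hd hperp
    have h1 : A - X = (A - O) - (X - O) := by abel
    have h2 : ‖(A - O) - (X - O)‖^2 = ‖A-O‖^2 - 2 * inner ℝ (A-O) (X-O) + ‖X-O‖^2 :=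
      norm_sub_sq_real _ _
    have h3 : ‖A - X‖ = a := by rw [← dist_eq_norm, hd]
    rw [← h1, h3, hperp] at h2
    linarith
  have nB := pyth B hAB pB
  have nC := pyth C hAC pC
  have nD := pyth D hAD pD
  have pairs : ∀ X Y : EuclideanSpace ℝ (Fin 3), dist X Y = s →
      inner ℝ (X - O) (Y - O) = (‖X - O‖^2 + ‖Y - O‖^2 - s^2) / 2 := by
    intro X Y hd
    have h1 : X - Y = (X - O) - (Y - O) := by abel
    have h2 : ‖(X - O) - (Y - O)‖^2 = ‖X-O‖^2 - 2 * inner ℝ (X-O) (Y-O) + ‖Y-O‖^2 :=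
      norm_sub_sq_real _ _
    have h3 : ‖X - Y‖ = s := by rw [← dist_eq_norm, hd]
    rw [← h1, h3] at h2
    linarith
  have kBC := pairs B C hBC
  have kCD := pairs C D hCD
  have kDB := pairs D B hDB
  -- B - O lies in the span of {B - C, B - D}
  have him : (fun x => B -ᵥ x) '' ({B, C, D} : Set (EuclideanSpace ℝ (Fin 3)))
      = insert (0 : EuclideanSpace ℝ (Fin 3)) {B - C, B - D} := by
    simp [Set.image_insert_eq, vsub_eq_sub]
  have hdir : (affineSpan ℝ ({B, C, D} : Set (EuclideanSpace ℝ (Fin 3)))).direction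
      = Submodule.span ℝ {B - C, B - D} := by
    rw [direction_affineSpan, vectorSpan_eq_span_vsub_set_left ℝ
      (show B ∈ ({B, C, D} : Set (EuclideanSpace ℝ (Fin 3))) by simp), him,
      Submodule.span_insert_zero]
  have hbmem : B - O ∈ Submodule.span ℝ ({B - C, B - D} : Set (EuclideanSpace ℝ (Fin 3))) := by
    rw [← hdir]
    simpa [vsub_eq_sub] using AffineSubspace.vsub_mem_direction hBm hO_mem
  obtain ⟨x, y, hxy⟩ := Submodule.mem_span_pair.mp hbmem
  set b := B - O with hbdef
  set c := C - O with hcdef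
  set d := D - O with hddef
  -- rewrite B - C = (B-O) - (C-O), B - D = (B-O) - (D-O)
  have e1 : B - C = b - c := by rw [hbdef, hcdef]; abel
  have e2 : B - D = b - d := by rw [hbdef, hddef]; abel
  rw [e1, e2] at hxy
  -- take inner products with B-O, C-O, D-O
  have symCB : (inner ℝ c b : ℝ) = inner ℝ b c := real_inner_comm _ _
  have symDB : (inner ℝ d b : ℝ) = inner ℝ b d := real_inner_comm _ _
  have symDC : (inner ℝ d c : ℝ) = inner ℝ c d := real_inner_comm _ _
  have iB : (inner ℝ (x • (b - c) + y • (b - d)) b : ℝ)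
      = inner ℝ b b := by rw [hxy]
  have iC : (inner ℝ (x • (b - c) + y • (b - d)) c : ℝ)
      = inner ℝ b c := by rw [hxy]
  have iD : (inner ℝ (x • (b - c) + y • (b - d)) d : ℝ)
      = inner ℝ b d := by rw [hxy]
  simp only [inner_add_left, real_inner_smul_left, inner_sub_left] at iB iC iD
  have ncb : ‖c‖^2 = ‖b‖^2 := by rw [nB, nC]
  have ndb : ‖d‖^2 = ‖b‖^2 := by rw [nB, nD]
  have kbc : (inner ℝ b c : ℝ) = ‖b‖^2 - s^2/2 := by rw [kBC, ncb]; ring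
  have kbd : (inner ℝ b d : ℝ) = ‖b‖^2 - s^2/2 := by rw [← symDB, kDB, ndb]; ring
  have kcd : (inner ℝ c d : ℝ) = ‖b‖^2 - s^2/2 := by rw [kCD, ncb, ndb]; ring
  rw [real_inner_self_eq_norm_sq b, symCB, symDB, kbc, kbd] at iB
  rw [real_inner_self_eq_norm_sq c, symDC, kbc, kcd, ncb] at iC
  rw [real_inner_self_eq_norm_sq d, kbd, kcd, ndb] at iD
  -- derive ‖B-O‖² = s²/3
  have hr : ‖b‖^2 = s^2 / 3 := by linear_combination -(iB + iC + iD) / 3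
  -- a² < 4 s² / 3
  have h3 : (Real.sqrt 3) ^ 2 = 3 := Real.sq_sqrt (by norm_num)
  have hsqrt3 : (0:ℝ) < Real.sqrt 3 := Real.sqrt_pos.mpr (by norm_num)
  have ha0' : 0 ≤ a := by rw [← hAB]; exact dist_nonneg
  have haa : a^2 < 4 * s^2 / 3 := by
    have h1 : a * Real.sqrt 3 < 2 * s := by
      rw [lt_div_iff₀ hsqrt3] at ha_hi
      exact ha_hi
    have hm := mul_self_lt_mul_self (mul_nonneg ha0' hsqrt3.le) h1
    have he : (a * Real.sqrt 3) * (a * Real.sqrt 3) = a^2 * 3 := by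
      linear_combination a^2 * h3
    rw [he] at hm
    linarith
  -- finish
  rw [Set.disjoint_left]
  intro P hP hline
  have hline' : P ∈ affineSpan ℝ ({A, O} : Set (EuclideanSpace ℝ (Fin 3))) := hline
  have hv : P -ᵥ A ∈ (affineSpan ℝ ({A, O} : Set (EuclideanSpace ℝ (Fin 3)))).direction :=
    AffineSubspace.vsub_mem_direction hline' (left_mem_affineSpan_pair ℝ A O)
  rw [direction_affineSpan, mem_vectorSpan_pair_rev] at hv
  obtain ⟨t, ht⟩ := hv
  have ht' : t • (O - A) = P - A := by simpa [vsub_eq_sub] using ht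
  have hP' : P = t • (O - A) + A := by rw [ht']; abel
  have hPB : P - B = (1 - t) • (A - O) - b := by
    rw [hP', hbdef]
    module
  have hperpP : (inner ℝ ((1 - t) • (A - O)) b : ℝ) = 0 := by
    rw [real_inner_smul_left, pB, mul_zero]
  have hnP : ‖P - B‖^2 = ‖(1-t) • (A - O)‖^2 + ‖b‖^2 := by
    rw [hPB, norm_sub_sq_real, hperpP]
    ring
  have hball : dist P B ≤ a / 2 := Metric.mem_closedBall.mp hP
  have hdist : ‖P - B‖ ≤ a / 2 := by rwa [← dist_eq_norm]
  have h1 : ‖P - B‖^2 ≤ (a/2)^2 := pow_le_pow_left₀ (norm_nonneg _) hdist 2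
  have e : (a/2)^2 = a^2/4 := by ring
  linarith [hnP, hr, h1, haa, sq_nonneg ‖(1-t) • (A - O)‖, e]
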